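/- The set WF of well-founded trees is a complete co-analytic set: (1) WF is a co-analytic subset of the Polish space (List ℕ → Bool), i.e., its complement is analytic; (2) for every Polish space X and every co-analytic subset C ⊆ X (a set whose complement is analytic) there exists a Borel measurable function f : X → (List ℕ → Bool), taking values in the set Trees, such that for all x ∈ X: x ∈ C if and only if f x ∈ WF; (3) WF is not a Borel subset of (List ℕ → Bool). -/

import Mathlib

/-- A tree on `ℕ`, coded by its characteristic function: a set of finite sequences closed
under initial segments. -/
def IsTree (T : List ℕ → Bool) : Prop :=
  ∀ s t : List ℕ, T s = true → t <+: s → T t = true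

/-- A tree (coded by a characteristic function) is ill-founded if it has an infinite branch. -/
def IllFounded (T : List ℕ → Bool) : Prop :=
  ∃ f : ℕ → ℕ, ∀ n : ℕ, T (List.ofFn fun i : Fin n => f i) = true

/-- The set of (characteristic functions of) trees. -/
def Trees : Set (List ℕ → Bool) := {T | IsTree T}

/-- The set of well-founded trees. -/
def WF : Set (List ℕ → Bool) := {T | IsTree T ∧ ¬ IllFounded T}

open MeasureTheory Set

namespace WFAux

instance : PolishSpace ((List ℕ → Bool) × (ℕ → ℕ)) :=
  @instPolishSpaceOfSeparableSpaceOfIsCompletelyMetrizableSpace _ _ inferInstance inferInstance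
instance : PolishSpace ((ℕ → ℕ) × (ℕ → ℕ)) :=
  @instPolishSpaceOfSeparableSpaceOfIsCompletelyMetrizableSpace _ _ inferInstance inferInstance
instance : PolishSpace (List ℕ → Bool) :=
  @instPolishSpaceOfSeparableSpaceOfIsCompletelyMetrizableSpace _ _ inferInstance inferInstance

/-- The restriction of `f : ℕ → ℕ` to its first `n` values, as a list. -/
def res (f : ℕ → ℕ) (n : ℕ) : List ℕ := List.ofFn fun i : Fin n => f i

@[simp] lemma length_res (f : ℕ → ℕ) (n : ℕ) : (res f n).length = n := by simp [res]

lemma res_eq_res {f g : ℕ → ℕ} {n : ℕ} (h : ∀ i < n, f i = g i) : res f n = res g n := by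
  apply List.ext_getElem (by simp)
  intro i h1 h2
  simp only [res, List.getElem_ofFn]
  exact h i (by simpa using h1)

lemma res_inj {f g : ℕ → ℕ} {n : ℕ} (h : res f n = res g n) : ∀ i < n, f i = g i := by
  intro i hi
  have h1 : i < (res f n).length := by simpa using hi
  have := List.getElem_of_eq h h1
  simpa only [res, List.getElem_ofFn] using this

lemma prefix_res {f : ℕ → ℕ} {n : ℕ} {t : List ℕ} (h : t <+: res f n) :
    res f t.length = t := by
  apply List.ext_getElem (by simp)
  intro i h1 h2
  have h4 := h.getElem h2
  simp only [res, List.getElem_ofFn] at h4 ⊢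
  exact h4.symm

/-- Cylinder lemma: any open set of a countable product of discrete spaces containing a point
contains a cylinder around the point. -/
lemma exists_cylinder {E : ℕ → Type*} [∀ n, TopologicalSpace (E n)] [∀ n, DiscreteTopology (E n)]
    {W : Set (∀ n, E n)} (hW : IsOpen W) {y : ∀ n, E n} (hy : y ∈ W) :
    ∃ n : ℕ, ∀ z, (∀ i < n, z i = y i) → z ∈ W := by
  obtain ⟨s, ⟨x, n, rfl⟩, hys, hsW⟩ :=
    (PiNat.isTopologicalBasis_cylinders E).exists_subset_of_mem_open hy hW
  refine ⟨n, fun z hz => hsW ?_⟩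
  intro i hi
  exact (hz i hi).trans (hys i hi)

lemma isOpen_res_eq (n : ℕ) (l : List ℕ) : IsOpen {f : ℕ → ℕ | res f n = l} := by
  rw [isOpen_iff_mem_nhds]
  intro f hf
  have hsub : PiNat.cylinder f n ⊆ {f : ℕ → ℕ | res f n = l} := by
    intro g hg
    have : res g n = res f n := res_eq_res (fun i hi => hg i hi)
    simpa [this] using hf
  exact Filter.mem_of_superset
    ((PiNat.isOpen_cylinder (E := fun _ => ℕ) f n).mem_nhds (fun i _ => rfl)) hsub

/-- Evaluation-type maps with "discretely varying" index are continuous. -/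
lemma continuous_eval_comp {X ι B : Type*} [TopologicalSpace X] [TopologicalSpace B]
    [DiscreteTopology B] (g : X → ι) (hg : ∀ i, IsOpen (g ⁻¹' {i}))
    (F : X → ι → B) (hF : ∀ i, Continuous fun x => F x i) :
    Continuous fun x => F x (g x) := by
  rw [continuous_discrete_rng]
  intro b
  have : (fun x => F x (g x)) ⁻¹' {b} = ⋃ i, ((fun x => F x i) ⁻¹' {b}) ∩ g ⁻¹' {i} := by
    ext x
    simp only [mem_preimage, mem_iUnion, mem_inter_iff, mem_singleton_iff]
    exact ⟨fun h => ⟨g x, h, rfl⟩, fun ⟨i, h1, h2⟩ => by rw [h2]; exact h1⟩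
  rw [this]
  exact isOpen_iUnion fun i =>
    (((hF i).isOpen_preimage _ (isOpen_discrete _))).inter (hg i)

/-! ### Part 1: WFᶜ is analytic -/

lemma compl_WF : WFᶜ = {T | ¬ IsTree T} ∪ {T | IllFounded T} := by
  ext T
  simp only [WF, mem_compl_iff, mem_setOf_eq, mem_union]
  tauto

lemma isOpen_nontree : IsOpen {T : List ℕ → Bool | ¬ IsTree T} := by
  have heq : {T : List ℕ → Bool | ¬ IsTree T} =
      ⋃ (s : List ℕ) (t : List ℕ) (_ : t <+: s),
        ((fun T : List ℕ → Bool => T s) ⁻¹' {true} ∩ (fun T : List ℕ → Bool => T t) ⁻¹' {false}) := by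
    ext T
    simp only [mem_setOf_eq, IsTree, mem_iUnion, mem_inter_iff, mem_preimage,
      mem_singleton_iff]
    constructor
    · intro h
      push_neg at h
      obtain ⟨s, t, hs, hts, ht⟩ := h
      exact ⟨s, t, hts, hs, by simpa using ht⟩
    · rintro ⟨s, t, hts, hs, ht⟩ h
      have := h s t hs hts
      simp [this] at ht
  rw [heq]
  exact isOpen_iUnion fun s => isOpen_iUnion fun t => isOpen_iUnion fun _ =>
    (((continuous_apply s).isOpen_preimage _ (isOpen_discrete _)).inter
      ((continuous_apply t).isOpen_preimage _ (isOpen_discrete _)))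

lemma continuous_branch_test (n : ℕ) :
    Continuous fun p : (List ℕ → Bool) × (ℕ → ℕ) => p.1 (res p.2 n) := by
  exact continuous_eval_comp (fun p : (List ℕ → Bool) × (ℕ → ℕ) => res p.2 n)
    (fun l => (isOpen_res_eq n l).preimage continuous_snd)
    (fun p l => p.1 l)
    (fun l => (continuous_apply l).comp continuous_fst)

lemma analyticSet_illFounded : AnalyticSet {T : List ℕ → Bool | IllFounded T} := by
  set S : Set ((List ℕ → Bool) × (ℕ → ℕ)) := {p | ∀ n, p.1 (res p.2 n) = true} with hS
  have hclosed : IsClosed S := by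
    have : S = ⋂ n, (fun p : (List ℕ → Bool) × (ℕ → ℕ) => p.1 (res p.2 n)) ⁻¹' {true} := by
      ext p; simp [hS]
    rw [this]
    exact isClosed_iInter fun n => (isClosed_singleton).preimage (continuous_branch_test n)
  have himg : Prod.fst '' S = {T : List ℕ → Bool | IllFounded T} := by
    ext T
    simp only [mem_image, mem_setOf_eq, IllFounded]
    constructor
    · rintro ⟨⟨T', f⟩, hp, rfl⟩
      exact ⟨f, fun n => hp n⟩
    · rintro ⟨f, hf⟩
      exact ⟨(T, f), hf, rfl⟩
  rw [← himg]
  exact hclosed.analyticSet.image_of_continuous continuous_fst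

lemma analyticSet_compl_WF : AnalyticSet WFᶜ := by
  rw [compl_WF, Set.union_eq_iUnion]
  apply AnalyticSet.iUnion
  intro b
  cases b
  · simpa using analyticSet_illFounded
  · simpa using isOpen_nontree.measurableSet.analyticSet

/-! ### Part 2: completeness -/

/-- The "excluded" open sets in the reduction construction. -/
def Vset {X : Type} [TopologicalSpace X] (g : (ℕ → ℕ) → X) (t : List ℕ) : Set X :=
  {x | ∃ U : Set X, IsOpen U ∧ x ∈ U ∧ ∀ x' ∈ U, ∀ y : ℕ → ℕ, res y t.length = t → g y ≠ x'}

lemma isOpen_Vset {X : Type} [TopologicalSpace X] (g : (ℕ → ℕ) → X) (t : List ℕ) :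
    IsOpen (Vset g t) := by
  rw [isOpen_iff_mem_nhds]
  rintro x ⟨U, hU, hxU, hcond⟩
  have hsub : U ⊆ Vset g t := fun x' hx' => ⟨U, hU, hx', hcond⟩
  exact Filter.mem_of_superset (hU.mem_nhds hxU) hsub

open Classical in
/-- The reduction map: to each `x` we associate a tree. -/
noncomputable def treeFn {X : Type} [TopologicalSpace X] (g : (ℕ → ℕ) → X) (x : X)
    (s : List ℕ) : Bool :=
  decide (∀ t, t <+: s → x ∉ Vset g t)

lemma isTree_treeFn {X : Type} [TopologicalSpace X] (g : (ℕ → ℕ) → X) (x : X) :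
    IsTree (treeFn g x) := by
  intro s t hs hts
  simp only [treeFn, decide_eq_true_eq] at hs ⊢
  intro t' ht'
  exact hs t' (ht'.trans hts)

lemma measurable_treeFn {X : Type} [TopologicalSpace X] [MeasurableSpace X] [BorelSpace X]
    (g : (ℕ → ℕ) → X) : Measurable (treeFn g) := by
  apply measurable_pi_lambda
  intro s
  apply measurable_to_countable'
  intro b
  have hS : MeasurableSet {x : X | ∀ t, t <+: s → x ∉ Vset g t} := by
    have : {x : X | ∀ t, t <+: s → x ∉ Vset g t} = ⋂ t ∈ {t : List ℕ | t <+: s}, (Vset g t)ᶜ := by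
      ext x; simp
    rw [this]
    exact MeasurableSet.biInter (Set.to_countable _)
      (fun t _ => (isOpen_Vset g t).measurableSet.compl)
  have hpre : ∀ b : Bool, (fun x => treeFn g x s) ⁻¹' {b} =
      if b then {x : X | ∀ t, t <+: s → x ∉ Vset g t}
      else {x : X | ∀ t, t <+: s → x ∉ Vset g t}ᶜ := by
    intro b
    cases b <;> ext x <;> simp [treeFn]
  rw [hpre b]
  cases b
  · simpa using hS.compl
  · simpa using hS

lemma illFounded_treeFn_iff {X : Type} [TopologicalSpace X] [PolishSpace X]
    {g : (ℕ → ℕ) → X} (hg : Continuous g) (x : X) :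
    IllFounded (treeFn g x) ↔ x ∈ range g := by
  constructor
  · rintro ⟨y, hy⟩
    refine ⟨y, ?_⟩
    by_contra hne
    have hFc : IsOpen {p : X × (ℕ → ℕ) | g p.2 ≠ p.1} := by
      have : IsClosed {p : X × (ℕ → ℕ) | g p.2 = p.1} :=
        isClosed_eq (hg.comp continuous_snd) continuous_fst
      simpa [compl_setOf] using this.isOpen_compl
    have hmem : (x, y) ∈ {p : X × (ℕ → ℕ) | g p.2 ≠ p.1} := hne
    obtain ⟨U, V, hU, hV, hxU, hyV, hUV⟩ := isOpen_prod_iff.1 hFc x y hmem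
    obtain ⟨n, hn⟩ := exists_cylinder hV hyV
    have hxV : x ∈ Vset g (res y n) := by
      refine ⟨U, hU, hxU, ?_⟩
      intro x' hx' y' hy'
      rw [length_res] at hy'
      have : y' ∈ V := hn y' (res_inj hy')
      exact hUV (Set.mk_mem_prod hx' this)
    have := hy n
    simp only [treeFn, decide_eq_true_eq] at this
    exact this (res y n) (List.prefix_refl _) hxV
  · rintro ⟨y, hy⟩
    refine ⟨y, fun n => ?_⟩
    simp only [treeFn, decide_eq_true_eq]
    rintro t htp ⟨U, hU, hxU, hcond⟩
    exact hcond x hxU y (prefix_res htp) hy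

lemma mem_WF_treeFn_iff {X : Type} [TopologicalSpace X] [PolishSpace X]
    {g : (ℕ → ℕ) → X} (hg : Continuous g) (x : X) :
    treeFn g x ∈ WF ↔ x ∉ range g := by
  constructor
  · rintro ⟨_, hni⟩ hmem
    exact hni ((illFounded_treeFn_iff hg x).2 hmem)
  · intro hmem
    exact ⟨isTree_treeFn g x, fun hi => hmem ((illFounded_treeFn_iff hg x).1 hi)⟩

lemma emptyTree_mem_WF : (fun _ : List ℕ => false) ∈ WF := by
  refine ⟨fun s t h _ => by simp at h, ?_⟩
  rintro ⟨f, hf⟩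
  simpa using hf 0

lemma part2 (X : Type) [TopologicalSpace X] [PolishSpace X] [MeasurableSpace X] [BorelSpace X]
    (C : Set X) (hC : AnalyticSet Cᶜ) :
    ∃ f : X → (List ℕ → Bool), Measurable f ∧ (∀ x, f x ∈ Trees) ∧
      ∀ x : X, x ∈ C ↔ f x ∈ WF := by
  rw [AnalyticSet] at hC
  rcases hC with hC | ⟨g, hgc, hgr⟩
  · refine ⟨fun _ _ => false, measurable_const, fun _ => emptyTree_mem_WF.1, fun x => ?_⟩
    have hCu : C = univ := compl_empty_iff.mp hC
    simp [hCu, emptyTree_mem_WF]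
  · refine ⟨treeFn g, measurable_treeFn g, fun x => isTree_treeFn g x, fun x => ?_⟩
    rw [mem_WF_treeFn_iff hgc x, hgr]
    simp [mem_compl_iff]

/-! ### Part 3: WF is not Borel -/

/-- Code for a pair of lists. -/
def code (p : List ℕ × List ℕ) : ℕ := Encodable.encode p

lemma code_injective : Function.Injective code := Encodable.encode_injective

/-- The universal analytic-set membership relation. -/
def Phi (β y : ℕ → ℕ) : Prop := ∃ z : ℕ → ℕ, ∀ n, β (code (res y n, res z n)) = 1

lemma agree_limit {g : (ℕ → ℕ) → (ℕ → ℕ)} (hg : Continuous g) {y z : ℕ → ℕ}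
    (h : ∀ n, ∃ w, res (g w) n = res y n ∧ res w n = res z n) : g z = y := by
  funext k
  have hck : Continuous fun w => g w k := (continuous_apply k).comp hg
  have hopen : IsOpen ((fun w => g w k) ⁻¹' {g z k}) :=
    hck.isOpen_preimage _ (isOpen_discrete _)
  obtain ⟨n₀, hn₀⟩ := exists_cylinder hopen
    (show z ∈ (fun w => g w k) ⁻¹' {g z k} from rfl)
  obtain ⟨w, hw1, hw2⟩ := h (max n₀ (k + 1))
  have h1 : g w k = g z k := hn₀ w fun i hi => res_inj hw2 i (lt_of_lt_of_le hi (le_max_left _ _))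
  have h2 : g w k = y k := res_inj hw1 k (lt_of_lt_of_le (Nat.lt_succ_self k) (le_max_right _ _))
  rw [← h1, h2]

open Classical in
lemma univ_section (A : Set (ℕ → ℕ)) (hA : AnalyticSet A) :
    ∃ β : ℕ → ℕ, ∀ y, y ∈ A ↔ Phi β y := by
  rw [AnalyticSet] at hA
  rcases hA with hA | ⟨g, hgc, hgr⟩
  · refine ⟨fun _ => 0, fun y => ?_⟩
    rw [hA]
    simp only [mem_empty_iff_false, false_iff, Phi]
    rintro ⟨z, hz⟩
    simpa using hz 0
  · refine ⟨fun k => if ∃ (w : ℕ → ℕ) (m : ℕ), k = code (res (g w) m, res w m) then 1 else 0,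
      fun y => ?_⟩
    rw [← hgr]
    constructor
    · rintro ⟨z, rfl⟩
      refine ⟨z, fun n => ?_⟩
      show (if ∃ (w : ℕ → ℕ) (m : ℕ),
          code (res (g z) n, res z n) = code (res (g w) m, res w m) then 1 else 0) = 1
      rw [if_pos ⟨z, n, rfl⟩]
    · rintro ⟨z, hz⟩
      have key : ∀ n, ∃ w, res (g w) n = res y n ∧ res w n = res z n := by
        intro n
        have := hz n
        dsimp only at this
        by_cases hcase : ∃ (w : ℕ → ℕ) (m : ℕ), code (res y n, res z n) = code (res (g w) m, res w m)
        · obtain ⟨w, m, hw⟩ := hcase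
          have hpair := code_injective hw
          have h1 : res y n = res (g w) m := congrArg Prod.fst hpair
          have h2 : res z n = res w m := congrArg Prod.snd hpair
          have hm : m = n := by
            have := congrArg List.length h1
            simp at this
            omega
          subst hm
          exact ⟨w, h1.symm, h2.symm⟩
        · rw [if_neg hcase] at this
          exact absurd this (by simp)
      exact ⟨z, agree_limit hgc key⟩

/-- The diagonal set. -/
def DC : Set (ℕ → ℕ) := {y | Phi y y}

lemma analyticSet_DC : AnalyticSet DC := by
  set S : Set ((ℕ → ℕ) × (ℕ → ℕ)) := {p | ∀ n, p.1 (code (res p.1 n, res p.2 n)) = 1} with hS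
  have hclosed : IsClosed S := by
    have heq : S = ⋂ n, (fun p : (ℕ → ℕ) × (ℕ → ℕ) =>
        p.1 (code (res p.1 n, res p.2 n))) ⁻¹' {1} := by
      ext p; simp [hS]
    rw [heq]
    refine isClosed_iInter fun n => (isClosed_singleton).preimage ?_
    refine continuous_eval_comp (fun p : (ℕ → ℕ) × (ℕ → ℕ) => (res p.1 n, res p.2 n))
      (fun q => ?_) (fun p q => p.1 (code q))
      (fun q => (continuous_apply (code q)).comp continuous_fst)
    have : (fun p : (ℕ → ℕ) × (ℕ → ℕ) => (res p.1 n, res p.2 n)) ⁻¹' {q} =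
        ((fun p : (ℕ → ℕ) × (ℕ → ℕ) => p.1) ⁻¹' {f | res f n = q.1}) ∩
        ((fun p : (ℕ → ℕ) × (ℕ → ℕ) => p.2) ⁻¹' {f | res f n = q.2}) := by
      ext p
      simp [Prod.ext_iff]
    rw [this]
    exact ((isOpen_res_eq n q.1).preimage continuous_fst).inter
      ((isOpen_res_eq n q.2).preimage continuous_snd)
  have himg : Prod.fst '' S = DC := by
    ext y
    simp only [mem_image, hS, mem_setOf_eq, DC, Phi]
    constructor
    · rintro ⟨⟨y', z⟩, hp, rfl⟩
      exact ⟨z, hp⟩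
    · rintro ⟨z, hz⟩
      exact ⟨(y, z), hz, rfl⟩
  rw [← himg]
  exact hclosed.analyticSet.image_of_continuous continuous_fst

lemma not_analyticSet_compl_DC : ¬ AnalyticSet DCᶜ := by
  intro h
  obtain ⟨β, hβ⟩ := univ_section DCᶜ h
  have := hβ β
  simp only [mem_compl_iff, DC, mem_setOf_eq] at this
  tauto

end WFAux

/-- The set of well-founded trees is a complete co-analytic set: its complement is analytic,
every co-analytic subset of a Polish space Borel-reduces to it (via a map taking values in
the trees), and it is not Borel. -/
theorem WF_complete_coanalytic :
    MeasureTheory.AnalyticSet WFᶜ ∧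
    (∀ (X : Type) [TopologicalSpace X] [PolishSpace X] [MeasurableSpace X] [BorelSpace X]
      (C : Set X), MeasureTheory.AnalyticSet Cᶜ →
      ∃ f : X → (List ℕ → Bool), Measurable f ∧ (∀ x, f x ∈ Trees) ∧
        ∀ x : X, x ∈ C ↔ f x ∈ WF) ∧
    ¬ MeasurableSet WF := by
  refine ⟨WFAux.analyticSet_compl_WF, fun X _ _ _ _ C hC => WFAux.part2 X C hC, ?_⟩
  intro hWF
  have hcompl : MeasureTheory.AnalyticSet (WFAux.DC)ᶜᶜ := by
    rw [compl_compl]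
    exact WFAux.analyticSet_DC
  obtain ⟨f, hfm, -, hiff⟩ := WFAux.part2 (ℕ → ℕ) (WFAux.DC)ᶜ hcompl
  have hDmeas : MeasurableSet (WFAux.DC)ᶜ := by
    have : (WFAux.DC)ᶜ = f ⁻¹' WF := by
      ext y
      exact hiff y
    rw [this]
    exact hfm hWF
  exact WFAux.not_analyticSet_compl_DC hDmeas.analyticSet
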